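/- Let A, B, X be bounded operators on a complex Hilbert space H and 0 ≤ α ≤ 1. Then for every unit vector k ∈ H, |⟨A* X B k, k⟩| ≤ (1/2)·⟨(B*|X|^(2α)B + A*|X*|^(2(1-α))A) k, k⟩. -/

import Mathlib

open scoped InnerProductSpace
open ContinuousLinearMap Complex

variable {H : Type*} [NormedAddCommGroup H] [InnerProductSpace ℂ H] [CompleteSpace H]

/-- `T ^ e` for a (positive) operator `T`, via the continuous functional calculus. -/
noncomputable def opow (T : H →L[ℂ] H) (e : ℝ) : H →L[ℂ] H :=
  cfc (fun t : ℝ => t ^ e) T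

/-- The absolute value `|T| = (T*T)^(1/2)` of an operator. -/
noncomputable def oabs (T : H →L[ℂ] H) : H →L[ℂ] H :=
  cfc Real.sqrt (ContinuousLinearMap.adjoint T * T)

namespace BerAux

open scoped ContinuousMapZero

lemma sa_aux (X : H →L[ℂ] H) : IsSelfAdjoint (adjoint X * X) := by
  rw [← star_eq_adjoint]; exact IsSelfAdjoint.star_mul_self X

lemma sa_aux' (X : H →L[ℂ] H) : IsSelfAdjoint (X * adjoint X) := by
  nth_rewrite 1 [← adjoint_adjoint X]
  rw [← star_eq_adjoint]; exact IsSelfAdjoint.star_mul_self (adjoint X)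

lemma nonneg_aux (X : H →L[ℂ] H) : 0 ≤ adjoint X * X := by
  rw [← star_eq_adjoint]; exact star_mul_self_nonneg X

lemma nonneg_aux' (X : H →L[ℂ] H) : 0 ≤ X * adjoint X := by
  nth_rewrite 1 [← adjoint_adjoint X]
  rw [← star_eq_adjoint]; exact star_mul_self_nonneg (adjoint X)

lemma inner_sa {T : H →L[ℂ] H} (hT : IsSelfAdjoint T) (v w : H) :
    ⟪T v, w⟫_ℂ = ⟪v, T w⟫_ℂ := by
  conv_lhs => rw [← hT.star_eq, star_eq_adjoint, adjoint_inner_left]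

lemma opow_oabs (X : H →L[ℂ] H) (e : ℝ) (he : 0 ≤ e) :
    opow (oabs X) e = cfc (fun t : ℝ => t ^ (e / 2)) (adjoint X * X) := by
  have ha := sa_aux X
  have hnn : ∀ t ∈ spectrum ℝ (adjoint X * X), 0 ≤ t :=
    spectrum_nonneg_of_nonneg (nonneg_aux X)
  rw [opow, oabs,
    ← cfc_comp' (fun t : ℝ => t ^ e) Real.sqrt (adjoint X * X)
      ((Real.continuous_rpow_const he).continuousOn) Real.continuous_sqrt.continuousOn ha]
  refine cfc_congr fun t ht => ?_
  have h0t := hnn t ht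
  rw [Real.sqrt_eq_rpow, ← Real.rpow_mul h0t]
  congr 1
  ring

set_option maxHeartbeats 1000000 in
set_option synthInstance.maxHeartbeats 200000 in
lemma intertwine (X : H →L[ℂ] H) (f : ℝ → ℝ)
    (hf : ContinuousOn f (quasispectrum ℝ (adjoint X * X))) (hf0 : f 0 = 0) :
    X * cfcₙ f (adjoint X * X) = cfcₙ f (X * adjoint X) * X := by
  set a := adjoint X * X with ha_def
  set b := X * adjoint X with hb_def
  have ha : IsSelfAdjoint a := sa_aux X
  have hb : IsSelfAdjoint b := sa_aux' X
  have hs : quasispectrum ℝ b = quasispectrum ℝ a := by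
    rw [quasispectrum_eq_spectrum_union_zero, quasispectrum_eq_spectrum_union_zero,
      ← Set.diff_union_self, ← Set.diff_union_self (s := spectrum ℝ a),
      spectrum.nonzero_mul_comm]
  have h0a : ((0 : quasispectrum ℝ a) : ℝ) = 0 := rfl
  have h0b : ((0 : quasispectrum ℝ b) : ℝ) = 0 := rfl
  let ι : C(quasispectrum ℝ b, quasispectrum ℝ a)₀ :=
    ⟨⟨fun x => ⟨x.1, hs ▸ x.2⟩, (continuous_subtype_val).subtype_mk _⟩, Subtype.ext rfl⟩
  have key : ∀ g : C(quasispectrum ℝ a, ℝ)₀,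
      X * cfcₙHom ha g = cfcₙHom hb (g.comp ι) * X := by
    intro g
    induction g using ContinuousMapZero.induction_on_of_compact with
    | zero =>
      have h2 : (0 : C(quasispectrum ℝ a, ℝ)₀).comp ι = 0 := by ext x; rfl
      rw [h2, map_zero, map_zero, mul_zero, zero_mul]
    | id =>
      have h2 : (ContinuousMapZero.id (quasispectrum ℝ a)).comp ι = ContinuousMapZero.id (quasispectrum ℝ b) := by
        ext x; rfl
      have e1 : cfcₙHom ha (ContinuousMapZero.id (quasispectrum ℝ a)) = a := cfcₙHom_id ha
      have e2 : cfcₙHom hb (ContinuousMapZero.id (quasispectrum ℝ b)) = b := cfcₙHom_id hb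
      rw [h2, e1, e2, ha_def, hb_def, mul_assoc]
    | star_id =>
      have hstar : star (ContinuousMapZero.id (quasispectrum ℝ a)) = ContinuousMapZero.id (quasispectrum ℝ a) := by
        ext x; simp
      have h2 : (ContinuousMapZero.id (quasispectrum ℝ a)).comp ι = ContinuousMapZero.id (quasispectrum ℝ b) := by
        ext x; rfl
      have e1 : cfcₙHom ha (ContinuousMapZero.id (quasispectrum ℝ a)) = a := cfcₙHom_id ha
      have e2 : cfcₙHom hb (ContinuousMapZero.id (quasispectrum ℝ b)) = b := cfcₙHom_id hb
      rw [hstar, h2, e1, e2, ha_def, hb_def, mul_assoc]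
    | add f g hfi hgi =>
      have h2 : (f + g).comp ι = f.comp ι + g.comp ι := by ext x; rfl
      rw [h2, map_add, map_add, mul_add, add_mul, hfi, hgi]
    | mul f g hfi hgi =>
      have h2 : (f * g).comp ι = f.comp ι * g.comp ι := by ext x; rfl
      rw [h2, map_mul, map_mul, ← mul_assoc, hfi, mul_assoc, hgi, ← mul_assoc]
    | smul r f hfi =>
      have h2 : (r • f).comp ι = r • (f.comp ι) := by ext x; rfl
      rw [h2, map_smul, map_smul, mul_smul_comm, hfi, smul_mul_assoc]
    | frequently f hfreq =>
      refine hfreq.mem_of_closed <| isClosed_eq ?_ ?_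
      · exact (continuous_mul_left X).comp (cfcₙHom_continuous ha)
      · exact (continuous_mul_right X).comp <|
          (cfcₙHom_continuous hb).comp (ContinuousMapZero.continuous_comp_left ι)
  have hf' : ContinuousOn f (quasispectrum ℝ b) := hs ▸ hf
  rw [cfcₙ_apply f a (hf := hf) (hf0 := hf0) (ha := ha),
    cfcₙ_apply f b (hf := hf') (hf0 := hf0) (ha := hb), key]
  refine congrArg (· * X) (congrArg (cfcₙHom hb) ?_)
  ext x; rfl

lemma norm_sq_apply {T : H →L[ℂ] H} (hT : IsSelfAdjoint T) (v : H) :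
    ‖T v‖ ^ 2 = (⟪(T * T) v, v⟫_ℂ).re := by
  rw [mul_apply_eq_comp, inner_sa hT (T v) v, ← inner_self_eq_norm_sq (𝕜 := ℂ)]
  rfl

set_option maxHeartbeats 1000000 in
lemma mixed (X : H →L[ℂ] H) {α : ℝ} (hα0 : 0 ≤ α) (hα1 : α ≤ 1) (x y : H) :
    ‖⟪X x, y⟫_ℂ‖ ≤ ‖cfc (fun t : ℝ => t ^ (α / 2)) (adjoint X * X) x‖ *
      ‖cfc (fun t : ℝ => t ^ ((1 - α) / 2)) (X * adjoint X) y‖ := by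
  set a := adjoint X * X with ha_def
  set b := X * adjoint X with hb_def
  have ha : IsSelfAdjoint a := sa_aux X
  have hb : IsSelfAdjoint b := sa_aux' X
  have hsa : ∀ t ∈ spectrum ℝ a, 0 ≤ t := spectrum_nonneg_of_nonneg (nonneg_aux X)
  have hsb : ∀ t ∈ spectrum ℝ b, 0 ≤ t := spectrum_nonneg_of_nonneg (nonneg_aux' X)
  have hqa : ∀ t ∈ quasispectrum ℝ a, 0 ≤ t :=
    quasispectrum_nonneg_of_nonneg a (nonneg_aux X)
  have hqs : quasispectrum ℝ b = quasispectrum ℝ a := by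
    rw [quasispectrum_eq_spectrum_union_zero, quasispectrum_eq_spectrum_union_zero,
      ← Set.diff_union_self, ← Set.diff_union_self (s := spectrum ℝ a),
      spectrum.nonzero_mul_comm]
  set P : H →L[ℂ] H := cfc (fun t : ℝ => t ^ (α / 2)) a with hP_def
  set Q : H →L[ℂ] H := cfc (fun t : ℝ => t ^ ((1 - α) / 2)) b with hQ_def
  have hQsa : IsSelfAdjoint Q := cfc_predicate _ _
  have hcp : Continuous (fun s : ℝ => s ^ (α / 2)) :=
    Real.continuous_rpow_const (by positivity)
  have main : ∀ ε : ℝ, 0 < ε →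
      ‖⟪X x, y⟫_ℂ‖ ≤ ‖P x‖ * ‖Q y‖ + Real.sqrt ε * (‖x‖ * ‖y‖) := by
    intro ε hε
    set q : ℝ → ℝ := fun s => s ^ (1 - α / 2) / (s + ε) with hq_def
    set r : ℝ → ℝ := fun s => s / (s + ε) with hr_def
    set e : ℝ → ℝ := fun s => ε / (s + ε) with he_def
    have hc1 : Continuous (fun s : ℝ => s ^ (1 - α / 2)) :=
      Real.continuous_rpow_const (by nlinarith)
    have hne : ∀ s ∈ spectrum ℝ a, s + ε ≠ 0 := fun s hs => by nlinarith [hsa s hs]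
    have hneq : ∀ s ∈ quasispectrum ℝ a, s + ε ≠ 0 := fun s hs => by nlinarith [hqa s hs]
    have hcq : ContinuousOn q (quasispectrum ℝ a) :=
      ContinuousOn.div hc1.continuousOn (Continuous.continuousOn (by fun_prop)) hneq
    have hcq' : ContinuousOn q (spectrum ℝ a) :=
      hcq.mono (spectrum_subset_quasispectrum ℝ a)
    have hcr : ContinuousOn r (spectrum ℝ a) :=
      ContinuousOn.div continuous_id.continuousOn (Continuous.continuousOn (by fun_prop)) hne
    have hce : ContinuousOn e (spectrum ℝ a) :=
      ContinuousOn.div continuous_const.continuousOn (Continuous.continuousOn (by fun_prop)) hne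
    -- the splitting of the identity
    have hsplit : cfc r a + cfc e a = 1 := by
      rw [← cfc_add a r e hcr hce]
      have h1 : cfc (fun s => r s + e s) a = cfc (fun _ : ℝ => (1 : ℝ)) a :=
        cfc_congr fun s hs => by
          rw [hr_def, he_def]
          show s / (s + ε) + ε / (s + ε) = 1
          rw [← add_div, div_self (hne s hs)]
      rw [h1]
      exact cfc_one ℝ a
    have hx_split : x = cfc r a x + cfc e a x := by
      have h2 := congrArg (fun T : H →L[ℂ] H => T x) hsplit
      simpa using h2.symm
    -- the tail estimate
    have tail : ‖X (cfc e a x)‖ ≤ Real.sqrt ε * ‖x‖ := by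
      have hesa : IsSelfAdjoint (cfc e a) := cfc_predicate _ _
      have hida : cfc (fun s : ℝ => s) a = a := cfc_id' ℝ a ha
      have hae : a * cfc e a = cfc (fun s : ℝ => s * e s) a := by
        nth_rewrite 1 [← hida]
        exact (cfc_mul _ _ a (by fun_prop) hce).symm
      have hM : cfc e a * cfc (fun s : ℝ => s * e s) a
          = cfc (fun s : ℝ => e s * (s * e s)) a :=
        (cfc_mul _ _ a hce (continuousOn_id.mul hce)).symm
      have hnorm : ‖cfc (fun s : ℝ => e s * (s * e s)) a‖ ≤ ε := by
        refine norm_cfc_le hε.le fun s hs => ?_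
        have h0s := hsa s hs
        have hb1 : e s * (s * e s) = ε ^ 2 * s / ((s + ε) ^ 2) := by
          rw [he_def]
          show ε / (s + ε) * (s * (ε / (s + ε))) = ε ^ 2 * s / (s + ε) ^ 2
          field_simp
        rw [Real.norm_eq_abs, hb1,
          _root_.abs_of_nonneg (show (0:ℝ) ≤ ε ^ 2 * s / (s + ε) ^ 2 by positivity),
          div_le_iff₀ (by positivity)]
        nlinarith [mul_nonneg hε.le (mul_nonneg h0s h0s),
          mul_nonneg (mul_nonneg hε.le hε.le) h0s, pow_pos hε 3]
      have hsq : ‖X (cfc e a x)‖ ^ 2 ≤ ε * ‖x‖ ^ 2 := by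
        have h1 : ⟪X (cfc e a x), X (cfc e a x)⟫_ℂ
            = ⟪x, cfc (fun s : ℝ => e s * (s * e s)) a x⟫_ℂ := by
          rw [← adjoint_inner_right X]
          calc ⟪cfc e a x, adjoint X (X (cfc e a x))⟫_ℂ
              = ⟪cfc e a x, (a * cfc e a) x⟫_ℂ := rfl
            _ = ⟪cfc e a x, cfc (fun s : ℝ => s * e s) a x⟫_ℂ := by rw [hae]
            _ = ⟪x, (cfc e a * cfc (fun s : ℝ => s * e s) a) x⟫_ℂ := by
                rw [inner_sa hesa]; rfl
            _ = ⟪x, cfc (fun s : ℝ => e s * (s * e s)) a x⟫_ℂ := by rw [hM]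
        have h2 : ‖X (cfc e a x)‖ ^ 2
            = (⟪x, cfc (fun s : ℝ => e s * (s * e s)) a x⟫_ℂ).re := by
          rw [← h1, ← inner_self_eq_norm_sq (𝕜 := ℂ)]; rfl
        rw [h2]
        calc (⟪x, cfc (fun s : ℝ => e s * (s * e s)) a x⟫_ℂ).re
            ≤ ‖⟪x, cfc (fun s : ℝ => e s * (s * e s)) a x⟫_ℂ‖ := Complex.re_le_norm _
          _ ≤ ‖x‖ * ‖cfc (fun s : ℝ => e s * (s * e s)) a x‖ := norm_inner_le_norm _ _
          _ ≤ ‖x‖ * (‖cfc (fun s : ℝ => e s * (s * e s)) a‖ * ‖x‖) := by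
              gcongr
              exact le_opNorm _ _
          _ ≤ ‖x‖ * (ε * ‖x‖) := by
              gcongr
          _ = ε * ‖x‖ ^ 2 := by ring
      have h3 := Real.sqrt_le_sqrt hsq
      rwa [Real.sqrt_sq (norm_nonneg _), Real.sqrt_mul hε.le, Real.sqrt_sq (norm_nonneg _)]
        at h3
    -- the main estimate
    have key : ‖⟪X (cfc r a x), y⟫_ℂ‖ ≤ ‖P x‖ * ‖Q y‖ := by
      have hrqp : cfc r a = cfc q a * cfc (fun s : ℝ => s ^ (α / 2)) a := by
        rw [← cfc_mul q _ a hcq' hcp.continuousOn]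
        refine cfc_congr fun s hs => ?_
        have h0s := hsa s hs
        show s / (s + ε) = s ^ (1 - α / 2) / (s + ε) * s ^ (α / 2)
        rw [div_mul_eq_mul_div, ← Real.rpow_add_of_nonneg h0s (by nlinarith) (by positivity),
          show (1 - α / 2) + α / 2 = 1 by ring, Real.rpow_one]
      have step1 : ⟪X (cfc r a x), y⟫_ℂ = ⟪P x, cfc q a (adjoint X y)⟫_ℂ := by
        rw [hrqp]
        calc ⟪X ((cfc q a * cfc (fun s : ℝ => s ^ (α / 2)) a) x), y⟫_ℂ
            = ⟪X (cfc q a (P x)), y⟫_ℂ := rfl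
          _ = ⟪cfc q a (P x), adjoint X y⟫_ℂ := (adjoint_inner_right X _ _).symm
          _ = ⟪P x, cfc q a (adjoint X y)⟫_ℂ := inner_sa (cfc_predicate q a) _ _
      have hcq2 : ContinuousOn (fun s => q s * q s) (quasispectrum ℝ a) := hcq.mul hcq
      have hcq2b : ContinuousOn (fun s => q s * q s) (quasispectrum ℝ b) := by
        rw [hqs]; exact hcq2
      have hcq2sb : ContinuousOn (fun s => q s * q s) (spectrum ℝ b) :=
        hcq2b.mono (spectrum_subset_quasispectrum ℝ b)
      have hq0 : q 0 = 0 := by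
        show (0 : ℝ) ^ (1 - α / 2) / (0 + ε) = 0
        rw [Real.zero_rpow (by nlinarith : (1 : ℝ) - α / 2 ≠ 0)]
        simp
      have hq20 : (fun s => q s * q s) 0 = 0 := by
        show q 0 * q 0 = 0
        rw [hq0]; ring
      have hiw : X * cfc (fun s => q s * q s) a = cfc (fun s => q s * q s) b * X := by
        have h := intertwine X (fun s => q s * q s) hcq2 hq20
        rwa [cfcₙ_eq_cfc (a := a) hcq2 hq20, cfcₙ_eq_cfc (a := b) hcq2b hq20] at h
      have hcQc : Continuous (fun s : ℝ => s ^ ((1 - α) / 2)) :=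
        Real.continuous_rpow_const (by nlinarith)
      have hc1α : ContinuousOn (fun s : ℝ => s ^ (1 - α)) (spectrum ℝ b) :=
        (Real.continuous_rpow_const (by nlinarith)).continuousOn
      have hQbound : ‖cfc q a (adjoint X y)‖ ≤ ‖Q y‖ := by
        have e1 : ‖cfc q a (adjoint X y)‖ ^ 2
            = (⟪(X * cfc (fun s => q s * q s) a * adjoint X) y, y⟫_ℂ).re := by
          rw [norm_sq_apply (cfc_predicate q a), ← cfc_mul q q a hcq' hcq']
          congr 1
          calc ⟪cfc (fun s => q s * q s) a (adjoint X y), adjoint X y⟫_ℂ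
              = ⟪X (cfc (fun s => q s * q s) a (adjoint X y)), y⟫_ℂ :=
                adjoint_inner_right X _ _
            _ = ⟪(X * cfc (fun s => q s * q s) a * adjoint X) y, y⟫_ℂ := rfl
        have hidb : cfc (fun s : ℝ => s) b = b := cfc_id' ℝ b hb
        have e2 : X * cfc (fun s => q s * q s) a * adjoint X
            = cfc (fun s => q s * q s * s) b := by
          rw [hiw, mul_assoc]
          calc cfc (fun s => q s * q s) b * (X * adjoint X)
              = cfc (fun s => q s * q s) b * cfc (fun s : ℝ => s) b := by
                rw [hidb, ← hb_def]
            _ = cfc (fun s => q s * q s * s) b :=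
                (cfc_mul _ _ b hcq2sb (by fun_prop)).symm
        have e3 : cfc (fun s => q s * q s * s) b ≤ cfc (fun s : ℝ => s ^ (1 - α)) b := by
          rw [← sub_nonneg, ← cfc_sub (fun s : ℝ => s ^ (1 - α)) (fun s => q s * q s * s) b hc1α (hcq2sb.mul (by fun_prop))]
          refine cfc_nonneg fun s hs => ?_
          have h0s := hsb s hs
          have hkey : q s * q s * s ≤ s ^ (1 - α) := by
            have c1 : q s * q s * s = s ^ (1 - α) * (s ^ 2 / (s + ε) ^ 2) := by
              show s ^ (1 - α / 2) / (s + ε) * (s ^ (1 - α / 2) / (s + ε)) * s = _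
              rw [div_mul_div_comm,
                ← Real.rpow_add_of_nonneg h0s (by nlinarith) (by nlinarith),
                show (1 - α / 2) + (1 - α / 2) = (1 - α) + 1 by ring,
                Real.rpow_add_of_nonneg h0s (by nlinarith) zero_le_one, Real.rpow_one]
              field_simp
            rw [c1]
            have c2 : s ^ 2 / (s + ε) ^ 2 ≤ 1 := by
              rw [div_le_one (by positivity)]
              nlinarith
            calc s ^ (1 - α) * (s ^ 2 / (s + ε) ^ 2)
                ≤ s ^ (1 - α) * 1 :=
                  mul_le_mul_of_nonneg_left c2 (Real.rpow_nonneg h0s _)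
              _ = s ^ (1 - α) := mul_one _
          linarith
        have e4 : (⟪cfc (fun s => q s * q s * s) b y, y⟫_ℂ).re
            ≤ (⟪cfc (fun s : ℝ => s ^ (1 - α)) b y, y⟫_ℂ).re := by
          have hdpos := (nonneg_iff_isPositive _).mp (sub_nonneg.mpr e3)
          have h5 : 0 ≤ (⟪(cfc (fun s : ℝ => s ^ (1 - α)) b
              - cfc (fun s => q s * q s * s) b) y, y⟫_ℂ).re := by
            exact hdpos.re_inner_nonneg_left y
          rw [sub_apply, inner_sub_left, Complex.sub_re] at h5
          linarith
        have e5 : (⟪cfc (fun s : ℝ => s ^ (1 - α)) b y, y⟫_ℂ).re = ‖Q y‖ ^ 2 := by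
          rw [norm_sq_apply hQsa, ← cfc_mul _ _ b hcQc.continuousOn hcQc.continuousOn]
          refine congrArg Complex.re (congrArg (fun T : H →L[ℂ] H => ⟪T y, y⟫_ℂ) ?_)
          refine cfc_congr fun s hs => ?_
          rw [← Real.rpow_add_of_nonneg (hsb s hs) (by nlinarith) (by nlinarith)]
          congr 1
          ring
        have hsq : ‖cfc q a (adjoint X y)‖ ^ 2 ≤ ‖Q y‖ ^ 2 := by
          rw [e1, e2, ← e5]
          exact e4
        have h6 := Real.sqrt_le_sqrt hsq
        rwa [Real.sqrt_sq (norm_nonneg _), Real.sqrt_sq (norm_nonneg _)] at h6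
      calc ‖⟪X (cfc r a x), y⟫_ℂ‖
          = ‖⟪P x, cfc q a (adjoint X y)⟫_ℂ‖ := by rw [step1]
        _ ≤ ‖P x‖ * ‖cfc q a (adjoint X y)‖ := norm_inner_le_norm _ _
        _ ≤ ‖P x‖ * ‖Q y‖ := mul_le_mul_of_nonneg_left hQbound (norm_nonneg _)
    conv_lhs => rw [hx_split]
    rw [map_add, inner_add_left]
    calc ‖⟪X (cfc r a x), y⟫_ℂ + ⟪X (cfc e a x), y⟫_ℂ‖
        ≤ ‖⟪X (cfc r a x), y⟫_ℂ‖ + ‖⟪X (cfc e a x), y⟫_ℂ‖ := norm_add_le _ _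
      _ ≤ ‖P x‖ * ‖Q y‖ + Real.sqrt ε * (‖x‖ * ‖y‖) := by
          refine add_le_add key ?_
          calc ‖⟪X (cfc e a x), y⟫_ℂ‖ ≤ ‖X (cfc e a x)‖ * ‖y‖ := norm_inner_le_norm _ _
            _ ≤ Real.sqrt ε * ‖x‖ * ‖y‖ := by gcongr
            _ = Real.sqrt ε * (‖x‖ * ‖y‖) := by ring
  -- conclude
  refine le_of_forall_pos_le_add fun δ hδ => ?_
  have hc0 : (0:ℝ) ≤ ‖x‖ * ‖y‖ := by positivity
  have hε : (0:ℝ) < (δ / (‖x‖ * ‖y‖ + 1)) ^ 2 := by positivity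
  have hsqrt : Real.sqrt ((δ / (‖x‖ * ‖y‖ + 1)) ^ 2) = δ / (‖x‖ * ‖y‖ + 1) :=
    Real.sqrt_sq (by positivity)
  refine (main _ hε).trans ?_
  rw [hsqrt]
  have : δ / (‖x‖ * ‖y‖ + 1) * (‖x‖ * ‖y‖) ≤ δ := by
    rw [div_mul_eq_mul_div, div_le_iff₀ (by positivity)]
    nlinarith
  linarith


end BerAux

theorem berezin_pointwise_mixed_schwarz (A B X : H →L[ℂ] H) (α : ℝ)
    (hα0 : 0 ≤ α) (hα1 : α ≤ 1) (k : H) (hk : ‖k‖ = 1) :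
    ‖⟪(ContinuousLinearMap.adjoint A * X * B) k, k⟫_ℂ‖ ≤
      (1 / 2) *
        (⟪(ContinuousLinearMap.adjoint B * opow (oabs X) (2 * α) * B +
            ContinuousLinearMap.adjoint A *
              opow (oabs (ContinuousLinearMap.adjoint X)) (2 * (1 - α)) * A) k, k⟫_ℂ).re := by
  have hsa : ∀ t ∈ spectrum ℝ (adjoint X * X), 0 ≤ t :=
    spectrum_nonneg_of_nonneg (BerAux.nonneg_aux X)
  have hsb : ∀ t ∈ spectrum ℝ (X * adjoint X), 0 ≤ t :=
    spectrum_nonneg_of_nonneg (BerAux.nonneg_aux' X)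
  set P : H →L[ℂ] H := cfc (fun t : ℝ => t ^ (α / 2)) (adjoint X * X) with hP_def
  set Q : H →L[ℂ] H := cfc (fun t : ℝ => t ^ ((1 - α) / 2)) (X * adjoint X) with hQ_def
  have hP : IsSelfAdjoint P := cfc_predicate _ _
  have hQ : IsSelfAdjoint Q := cfc_predicate _ _
  have hcP : Continuous (fun t : ℝ => t ^ (α / 2)) :=
    Real.continuous_rpow_const (by positivity)
  have hcQ : Continuous (fun t : ℝ => t ^ ((1 - α) / 2)) :=
    Real.continuous_rpow_const (by nlinarith)
  -- rewrite the two `opow` terms as squares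
  have h1 : opow (oabs X) (2 * α) = P * P := by
    rw [BerAux.opow_oabs X _ (by positivity), hP_def, ← cfc_mul _ _ _
      hcP.continuousOn hcP.continuousOn]
    refine cfc_congr fun t ht => ?_
    rw [← Real.rpow_add_of_nonneg (hsa t ht) (by positivity) (by positivity)]
    ring_nf
  have h2 : opow (oabs (adjoint X)) (2 * (1 - α)) = Q * Q := by
    rw [BerAux.opow_oabs (adjoint X) _ (by nlinarith), adjoint_adjoint, hQ_def, ← cfc_mul _ _ _
      hcQ.continuousOn hcQ.continuousOn]
    refine cfc_congr fun t ht => ?_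
    rw [← Real.rpow_add_of_nonneg (hsb t ht) (by nlinarith) (by nlinarith)]
    ring_nf
  rw [h1, h2]
  -- compute the right-hand side
  have hrhs : (⟪(adjoint B * (P * P) * B + adjoint A * (Q * Q) * A) k, k⟫_ℂ).re
      = ‖P (B k)‖ ^ 2 + ‖Q (A k)‖ ^ 2 := by
    rw [add_apply, inner_add_left, Complex.add_re]
    congr 1
    · rw [mul_apply_eq_comp, mul_apply_eq_comp, adjoint_inner_left, ← BerAux.norm_sq_apply hP]
    · rw [mul_apply_eq_comp, mul_apply_eq_comp, adjoint_inner_left, ← BerAux.norm_sq_apply hQ]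
  rw [hrhs]
  -- compute the left-hand side and apply the mixed Schwarz inequality
  have hlhs : ⟪(adjoint A * X * B) k, k⟫_ℂ = ⟪X (B k), A k⟫_ℂ := by
    rw [mul_apply_eq_comp, mul_apply_eq_comp, adjoint_inner_left]
  rw [hlhs]
  have := BerAux.mixed X hα0 hα1 (B k) (A k)
  rw [← hP_def, ← hQ_def] at this
  nlinarith [this, sq_nonneg (‖P (B k)‖ - ‖Q (A k)‖), norm_nonneg (⟪X (B k), A k⟫_ℂ)]
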